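/- Every dyad arises from a trijunction (Eilenberg–Moore-type construction): for every dyad on a category C, with endofunctors □ and ◇ and natural transformations ε^□, δ^{□□}, ε^◇, δ^{◇◇}, δ^{□◇}, δ^{◇□} as in the definition of a dyad, there exist a category D, a functor U : D ⥤ C, functors L, R : C ⥤ D, an adjunction adjL : L ⊣ U and an adjunction adjR : U ⊣ R such that L⋙U = ◇ and R⋙U = □ as endofunctors of C, and for every object A of C: adjR.counit at A equals ε^□_A, adjL.unit at A equals ε^◇_A, U applied to the component of adjR's unit at R A equals δ^{□□}_A, U applied to the component of adjL's counit at L A equals δ^{◇◇}_A, U applied to the component of adjR's unit at L A equals δ^{□◇}_A, and U applied to the component of adjL's counit at R A equals δ^{◇□}_A. -/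

import Mathlib

open CategoryTheory

universe v u

/-- A dyad on a category `C` (Došen–Petrić): a comonad `(□, ε^□, δ^{□□})`, a monad
`(◇, ε^◇, δ^{◇◇})`, and natural transformations `δ^{□◇} : ◇ ⟶ □◇` and
`δ^{◇□} : ◇□ ⟶ □` satisfying the equations (□◇β), (◇□β), (δN) and (δI)
for `M` each of `□`, `◇`.  (Composition `g ∘ f` of the paper is `f ≫ g` here.) -/
structure Dyad (C : Type u) [Category.{v} C] where
  /-- the endofunctor `□` -/
  box : C ⥤ C
  /-- the endofunctor `◇` -/
  dia : C ⥤ C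
  /-- `ε^□ : □ ⟶ Id` -/
  εbox : box ⟶ 𝟭 C
  /-- `δ^{□□} : □ ⟶ □□` -/
  δbb : box ⟶ box ⋙ box
  /-- `ε^◇ : Id ⟶ ◇` -/
  εdia : 𝟭 C ⟶ dia
  /-- `δ^{◇◇} : ◇◇ ⟶ ◇` -/
  δdd : dia ⋙ dia ⟶ dia
  /-- `δ^{□◇} : ◇ ⟶ □◇` -/
  δbd : dia ⟶ dia ⋙ box
  /-- `δ^{◇□} : ◇□ ⟶ □` -/
  δdb : box ⋙ dia ⟶ box
  /-- `ε^□_{□A} ∘ δ^{□□}_A = id` -/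
  box_counit_right : ∀ A : C, δbb.app A ≫ εbox.app (box.obj A) = 𝟙 (box.obj A)
  /-- `□ε^□_A ∘ δ^{□□}_A = id` -/
  box_counit_left : ∀ A : C, δbb.app A ≫ box.map (εbox.app A) = 𝟙 (box.obj A)
  /-- `□δ^{□□}_A ∘ δ^{□□}_A = δ^{□□}_{□A} ∘ δ^{□□}_A` -/
  box_coassoc : ∀ A : C, δbb.app A ≫ box.map (δbb.app A) = δbb.app A ≫ δbb.app (box.obj A)
  /-- `δ^{◇◇}_A ∘ ε^◇_{◇A} = id` -/
  dia_unit_right : ∀ A : C, εdia.app (dia.obj A) ≫ δdd.app A = 𝟙 (dia.obj A)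
  /-- `δ^{◇◇}_A ∘ ◇ε^◇_A = id` -/
  dia_unit_left : ∀ A : C, dia.map (εdia.app A) ≫ δdd.app A = 𝟙 (dia.obj A)
  /-- `δ^{◇◇}_A ∘ ◇δ^{◇◇}_A = δ^{◇◇}_A ∘ δ^{◇◇}_{◇A}` -/
  dia_assoc : ∀ A : C, dia.map (δdd.app A) ≫ δdd.app A = δdd.app (dia.obj A) ≫ δdd.app A
  /-- `(□◇β)`: `ε^□_{◇A} ∘ δ^{□◇}_A = id_{◇A}` -/
  bd_beta : ∀ A : C, δbd.app A ≫ εbox.app (dia.obj A) = 𝟙 (dia.obj A)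
  /-- `(◇□β)`: `δ^{◇□}_A ∘ ε^◇_{□A} = id_{□A}` -/
  db_beta : ∀ A : C, εdia.app (box.obj A) ≫ δdb.app A = 𝟙 (box.obj A)
  /-- `(δN)` for `M = □`: `□δ^{◇□}_A ∘ δ^{□◇}_{□A} = δ^{□□}_A ∘ δ^{◇□}_A` -/
  δN_box : ∀ A : C, δbd.app (box.obj A) ≫ box.map (δdb.app A) = δdb.app A ≫ δbb.app A
  /-- `(δN)` for `M = ◇`: `□δ^{◇◇}_A ∘ δ^{□◇}_{◇A} = δ^{□◇}_A ∘ δ^{◇◇}_A` -/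
  δN_dia : ∀ A : C, δbd.app (dia.obj A) ≫ box.map (δdd.app A) = δdd.app A ≫ δbd.app A
  /-- `(δI)` for `M = □`: `δ^{◇□}_{□A} ∘ ◇δ^{□□}_A = δ^{□□}_A ∘ δ^{◇□}_A` -/
  δI_box : ∀ A : C, dia.map (δbb.app A) ≫ δdb.app (box.obj A) = δdb.app A ≫ δbb.app A
  /-- `(δI)` for `M = ◇`: `δ^{◇□}_{◇A} ∘ ◇δ^{□◇}_A = δ^{□◇}_A ∘ δ^{◇◇}_A` -/
  δI_dia : ∀ A : C, dia.map (δbd.app A) ≫ δdb.app (dia.obj A) = δdd.app A ≫ δbd.app A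

namespace DyadAux

open Category

variable {C : Type u} [Category.{v} C] (D : Dyad C)

/-- The monad `◇` packaged as a Mathlib `Monad`. -/
abbrev monad : Monad C where
  toFunctor := D.dia
  η := D.εdia
  μ := D.δdd
  assoc := D.dia_assoc
  left_unit := D.dia_unit_right
  right_unit := D.dia_unit_left


lemma δdb_nat {X Y : C} (h : X ⟶ Y) :
    D.dia.map (D.box.map h) ≫ D.δdb.app Y = D.δdb.app X ≫ D.box.map h :=
  D.δdb.naturality h

lemma δbd_nat {X Y : C} (h : X ⟶ Y) :
    D.dia.map h ≫ D.δbd.app Y = D.δbd.app X ≫ D.box.map (D.dia.map h) :=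
  D.δbd.naturality h

lemma εdia_nat {X Y : C} (h : X ⟶ Y) :
    h ≫ D.εdia.app Y = D.εdia.app X ≫ D.dia.map h :=
  D.εdia.naturality h

lemma εbox_nat {X Y : C} (h : X ⟶ Y) :
    D.box.map h ≫ D.εbox.app Y = D.εbox.app X ≫ h :=
  D.εbox.naturality h

lemma step1 (A : C) :
    D.δdb.app A =
      D.δbd.app (D.box.obj A) ≫ D.box.map (D.δdb.app A) ≫ D.εbox.app (D.box.obj A) := by
  rw [← Category.assoc, D.δN_box, Category.assoc, D.box_counit_right, comp_id]

lemma db_assoc (A : C) :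
    D.δdd.app (D.box.obj A) ≫ D.δdb.app A = D.dia.map (D.δdb.app A) ≫ D.δdb.app A := by
  have nat : D.dia.map (D.box.map (D.δdb.app A)) ≫ D.δdb.app (D.box.obj A)
      = D.δdb.app (D.dia.obj (D.box.obj A)) ≫ D.box.map (D.δdb.app A) :=
    δdb_nat D (D.δdb.app A)
  calc D.δdd.app (D.box.obj A) ≫ D.δdb.app A
      = D.δdd.app (D.box.obj A) ≫ D.δbd.app (D.box.obj A) ≫
          D.box.map (D.δdb.app A) ≫ D.εbox.app (D.box.obj A) := by rw [← step1 D A]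
    _ = (D.δdd.app (D.box.obj A) ≫ D.δbd.app (D.box.obj A)) ≫
          D.box.map (D.δdb.app A) ≫ D.εbox.app (D.box.obj A) := by simp only [Category.assoc]
    _ = (D.dia.map (D.δbd.app (D.box.obj A)) ≫ D.δdb.app (D.dia.obj (D.box.obj A))) ≫
          D.box.map (D.δdb.app A) ≫ D.εbox.app (D.box.obj A) := by rw [D.δI_dia]
    _ = D.dia.map (D.δbd.app (D.box.obj A)) ≫
          (D.δdb.app (D.dia.obj (D.box.obj A)) ≫ D.box.map (D.δdb.app A)) ≫
          D.εbox.app (D.box.obj A) := by simp only [Category.assoc]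
    _ = D.dia.map (D.δbd.app (D.box.obj A)) ≫
          (D.dia.map (D.box.map (D.δdb.app A)) ≫ D.δdb.app (D.box.obj A)) ≫
          D.εbox.app (D.box.obj A) := by rw [nat]
    _ = D.dia.map (D.δbd.app (D.box.obj A) ≫ D.box.map (D.δdb.app A)) ≫
          D.δdb.app (D.box.obj A) ≫ D.εbox.app (D.box.obj A) := by
          simp only [Functor.map_comp, Category.assoc]
    _ = D.dia.map (D.δdb.app A ≫ D.δbb.app A) ≫
          D.δdb.app (D.box.obj A) ≫ D.εbox.app (D.box.obj A) := by rw [D.δN_box]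
    _ = D.dia.map (D.δdb.app A) ≫
          (D.dia.map (D.δbb.app A) ≫ D.δdb.app (D.box.obj A)) ≫
          D.εbox.app (D.box.obj A) := by simp only [Functor.map_comp, Category.assoc]
    _ = D.dia.map (D.δdb.app A) ≫
          (D.δdb.app A ≫ D.δbb.app A) ≫ D.εbox.app (D.box.obj A) := by rw [D.δI_box]
    _ = D.dia.map (D.δdb.app A) ≫ D.δdb.app A := by
          simp only [Category.assoc, D.box_counit_right, comp_id]

/-- The right adjoint `R : C ⥤ ◇-Alg`, `A ↦ (□A, δ^{◇□}_A)`. -/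
abbrev Rfun : C ⥤ (monad D).Algebra where
  obj A :=
    { A := D.box.obj A
      a := D.δdb.app A
      unit := D.db_beta A
      assoc := db_assoc D A }
  map f :=
    { f := D.box.map f
      h := D.δdb.naturality f }
  map_id A := by ext; exact D.box.map_id A
  map_comp f g := by ext; exact D.box.map_comp f g

/-- The candidate unit map `X ⟶ □X` for a `◇`-algebra `X`. -/
abbrev eta (X : (monad D).Algebra) : X.A ⟶ D.box.obj X.A :=
  D.εdia.app X.A ≫ D.δbd.app X.A ≫ D.box.map X.a

lemma eta_hom (X : (monad D).Algebra) :
    D.dia.map (eta D X) ≫ D.δdb.app X.A = X.a ≫ eta D X := by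
  have hX : D.δdd.app X.A ≫ X.a = D.dia.map X.a ≫ X.a := X.assoc
  calc D.dia.map (eta D X) ≫ D.δdb.app X.A
      = D.dia.map (D.εdia.app X.A) ≫ D.dia.map (D.δbd.app X.A) ≫
          (D.dia.map (D.box.map X.a) ≫ D.δdb.app X.A) := by
          simp only [Functor.map_comp, Category.assoc]
    _ = D.dia.map (D.εdia.app X.A) ≫ D.dia.map (D.δbd.app X.A) ≫
          (D.δdb.app (D.dia.obj X.A) ≫ D.box.map X.a) := by rw [δdb_nat (X := D.dia.obj X.A) D X.a]
    _ = D.dia.map (D.εdia.app X.A) ≫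
          (D.dia.map (D.δbd.app X.A) ≫ D.δdb.app (D.dia.obj X.A)) ≫ D.box.map X.a := by
          simp only [Category.assoc]
    _ = D.dia.map (D.εdia.app X.A) ≫ (D.δdd.app X.A ≫ D.δbd.app X.A) ≫ D.box.map X.a := by
          rw [D.δI_dia]
    _ = D.δbd.app X.A ≫ D.box.map X.a := by
          simp only [← Category.assoc, D.dia_unit_left]; simp
    _ = (D.εdia.app (D.dia.obj X.A) ≫ D.δdd.app X.A) ≫ D.δbd.app X.A ≫ D.box.map X.a := by
          rw [D.dia_unit_right]; simp
    _ = D.εdia.app (D.dia.obj X.A) ≫ (D.δdd.app X.A ≫ D.δbd.app X.A) ≫ D.box.map X.a := by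
          simp only [Category.assoc]
    _ = D.εdia.app (D.dia.obj X.A) ≫
          (D.δbd.app (D.dia.obj X.A) ≫ D.box.map (D.δdd.app X.A)) ≫ D.box.map X.a := by
          rw [D.δN_dia]
    _ = D.εdia.app (D.dia.obj X.A) ≫ D.δbd.app (D.dia.obj X.A) ≫
          D.box.map (D.δdd.app X.A ≫ X.a) := by simp only [Functor.map_comp, Category.assoc]
    _ = D.εdia.app (D.dia.obj X.A) ≫ D.δbd.app (D.dia.obj X.A) ≫
          D.box.map (D.dia.map X.a ≫ X.a) := by rw [hX]
    _ = D.εdia.app (D.dia.obj X.A) ≫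
          (D.δbd.app (D.dia.obj X.A) ≫ D.box.map (D.dia.map X.a)) ≫ D.box.map X.a := by
          simp only [Functor.map_comp, Category.assoc]
    _ = D.εdia.app (D.dia.obj X.A) ≫
          (D.dia.map X.a ≫ D.δbd.app X.A) ≫ D.box.map X.a := by
          rw [← δbd_nat (X := D.dia.obj X.A) D X.a]
    _ = (D.εdia.app (D.dia.obj X.A) ≫ D.dia.map X.a) ≫ D.δbd.app X.A ≫ D.box.map X.a := by
          simp only [Category.assoc]
    _ = (X.a ≫ D.εdia.app X.A) ≫ D.δbd.app X.A ≫ D.box.map X.a := by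
          rw [εdia_nat (X := D.dia.obj X.A) D X.a]
    _ = X.a ≫ eta D X := by simp only [Category.assoc, eta]

/-- The hom-set equivalence for `U ⊣ R`. -/
def homEquiv (X : (monad D).Algebra) (A : C) :
    (X.A ⟶ A) ≃ (X ⟶ (Rfun D).obj A) where
  toFun f :=
    { f := eta D X ≫ D.box.map f
      h := by
        show D.dia.map (eta D X ≫ D.box.map f) ≫ D.δdb.app A = X.a ≫ eta D X ≫ D.box.map f
        calc D.dia.map (eta D X ≫ D.box.map f) ≫ D.δdb.app A
            = D.dia.map (eta D X) ≫ D.dia.map (D.box.map f) ≫ D.δdb.app A := by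
              simp only [Functor.map_comp, Category.assoc]
          _ = D.dia.map (eta D X) ≫ D.δdb.app X.A ≫ D.box.map f := by
              rw [δdb_nat D f]
          _ = (D.dia.map (eta D X) ≫ D.δdb.app X.A) ≫ D.box.map f := by
              simp only [Category.assoc]
          _ = (X.a ≫ eta D X) ≫ D.box.map f := by rw [eta_hom]
          _ = X.a ≫ eta D X ≫ D.box.map f := by simp only [Category.assoc] }
  invFun g := g.f ≫ D.εbox.app A
  left_inv f := by
    show (eta D X ≫ D.box.map f) ≫ D.εbox.app A = f
    calc (eta D X ≫ D.box.map f) ≫ D.εbox.app A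
        = D.εdia.app X.A ≫ D.δbd.app X.A ≫ D.box.map X.a ≫
            (D.box.map f ≫ D.εbox.app A) := by simp only [eta, Category.assoc]
      _ = D.εdia.app X.A ≫ D.δbd.app X.A ≫
            (D.box.map X.a ≫ D.εbox.app X.A) ≫ f := by
            rw [εbox_nat D f]; simp only [Category.assoc]
      _ = D.εdia.app X.A ≫ (D.δbd.app X.A ≫ D.εbox.app (D.dia.obj X.A)) ≫ X.a ≫ f := by
            rw [εbox_nat (X := D.dia.obj X.A) D X.a]; simp only [Category.assoc]
      _ = (D.εdia.app X.A ≫ X.a) ≫ f := by rw [D.bd_beta]; simp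
      _ = f := by
            have hu : D.εdia.app X.A ≫ X.a = 𝟙 X.A := X.unit
            rw [hu]; simp
  right_inv g := by
    ext
    show eta D X ≫ D.box.map (g.f ≫ D.εbox.app A) = g.f
    have gh : D.dia.map g.f ≫ D.δdb.app A = X.a ≫ g.f := g.h
    calc eta D X ≫ D.box.map (g.f ≫ D.εbox.app A)
        = D.εdia.app X.A ≫ D.δbd.app X.A ≫
            D.box.map (X.a ≫ g.f) ≫ D.box.map (D.εbox.app A) := by
            simp only [eta, Functor.map_comp, Category.assoc]
      _ = D.εdia.app X.A ≫ D.δbd.app X.A ≫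
            D.box.map (D.dia.map g.f ≫ D.δdb.app A) ≫ D.box.map (D.εbox.app A) := by
            rw [gh]
      _ = D.εdia.app X.A ≫ (D.δbd.app X.A ≫ D.box.map (D.dia.map g.f)) ≫
            D.box.map (D.δdb.app A) ≫ D.box.map (D.εbox.app A) := by
            simp only [Functor.map_comp, Category.assoc]
      _ = D.εdia.app X.A ≫ (D.dia.map g.f ≫ D.δbd.app (D.box.obj A)) ≫
            D.box.map (D.δdb.app A) ≫ D.box.map (D.εbox.app A) := by
            rw [← δbd_nat (Y := D.box.obj A) D g.f]
      _ = D.εdia.app X.A ≫ D.dia.map g.f ≫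
            (D.δbd.app (D.box.obj A) ≫ D.box.map (D.δdb.app A)) ≫
            D.box.map (D.εbox.app A) := by simp only [Category.assoc]
      _ = D.εdia.app X.A ≫ D.dia.map g.f ≫
            D.δdb.app A ≫ (D.δbb.app A ≫ D.box.map (D.εbox.app A)) := by
            rw [D.δN_box]; simp only [Category.assoc]
      _ = (D.εdia.app X.A ≫ D.dia.map g.f) ≫ D.δdb.app A := by
            rw [D.box_counit_left]; simp
      _ = (g.f ≫ D.εdia.app (D.box.obj A)) ≫ D.δdb.app A := by
            rw [εdia_nat (Y := D.box.obj A) D g.f]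
      _ = g.f := by rw [Category.assoc, D.db_beta]; exact Category.comp_id g.f

/-- The adjunction `U ⊣ R`. -/
def adjR : (monad D).forget ⊣ Rfun D :=
  Adjunction.mkOfHomEquiv
    { homEquiv := fun X A => homEquiv D X A
      homEquiv_naturality_left_symm := by
        intro X' X A f g
        show (f ≫ g).f ≫ D.εbox.app A = f.f ≫ g.f ≫ D.εbox.app A
        simp
      homEquiv_naturality_right := by
        intro X A B f g
        ext
        show eta D X ≫ D.box.map (f ≫ g) = (eta D X ≫ D.box.map f) ≫ D.box.map g
        exact (congrArg (eta D X ≫ ·) (D.box.map_comp f g)).trans (Category.assoc _ _ _).symm }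

end DyadAux

/-- Every dyad arises from a trijunction (Eilenberg–Moore-type construction): there
are a category `E`, a functor `U : E ⥤ C` and functors `L R : C ⥤ E` with
adjunctions `L ⊣ U` and `U ⊣ R` such that `L ⋙ U = ◇` and `R ⋙ U = □`, the counit
of `U ⊣ R` is `ε^□`, the unit of `L ⊣ U` is `ε^◇`, and `U` applied to the
appropriate unit/counit components gives `δ^{□□}`, `δ^{◇◇}`, `δ^{□◇}`, `δ^{◇□}`. -/
theorem Dyad.arises_from_trijunction {C : Type u} [Category.{v} C] (D : Dyad C) :
    ∃ (E : Type (max u v)) (_ : Category.{v} E) (U : E ⥤ C) (L R : C ⥤ E)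
      (adjL : L ⊣ U) (adjR : U ⊣ R),
      L ⋙ U = D.dia ∧ R ⋙ U = D.box ∧
      (∀ A : C, HEq (adjR.counit.app A) (D.εbox.app A)) ∧
      (∀ A : C, HEq (adjL.unit.app A) (D.εdia.app A)) ∧
      (∀ A : C, HEq (U.map (adjR.unit.app (R.obj A))) (D.δbb.app A)) ∧
      (∀ A : C, HEq (U.map (adjL.counit.app (L.obj A))) (D.δdd.app A)) ∧
      (∀ A : C, HEq (U.map (adjR.unit.app (L.obj A))) (D.δbd.app A)) ∧
      (∀ A : C, HEq (U.map (adjL.counit.app (R.obj A))) (D.δdb.app A)) := by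
  classical
  refine ⟨(DyadAux.monad D).Algebra, inferInstance, (DyadAux.monad D).forget,
    (DyadAux.monad D).free, DyadAux.Rfun D, (DyadAux.monad D).adj, DyadAux.adjR D,
    rfl, rfl, ?_, ?_, ?_, ?_, ?_, ?_⟩ <;> intro A <;> apply heq_of_eq
  · show (DyadAux.homEquiv D ((DyadAux.Rfun D).obj A) A).symm (𝟙 _) = D.εbox.app A
    show Monad.Algebra.Hom.f (𝟙 ((DyadAux.Rfun D).obj A)) ≫ D.εbox.app A = D.εbox.app A
    simp
  · simp [DyadAux.monad]; rfl
  · show DyadAux.eta D ((DyadAux.Rfun D).obj A) ≫ D.box.map (𝟙 (D.box.obj A)) = D.δbb.app A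
    rw [CategoryTheory.Functor.map_id D.box (D.box.obj A)]
    refine (Category.comp_id _).trans ?_
    show D.εdia.app (D.box.obj A) ≫ D.δbd.app (D.box.obj A) ≫ D.box.map (D.δdb.app A)
        = D.δbb.app A
    rw [D.δN_box, ← Category.assoc, D.db_beta]
    exact Category.id_comp _
  · show D.dia.map (𝟙 (D.dia.obj A)) ≫ D.δdd.app A = D.δdd.app A
    rw [D.dia.map_id, Category.id_comp]
  · show DyadAux.eta D ((DyadAux.monad D).free.obj A) ≫ D.box.map (𝟙 (D.dia.obj A))
        = D.δbd.app A
    erw [CategoryTheory.Functor.map_id D.box (D.dia.obj A)]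
    refine (Category.comp_id _).trans ?_
    show D.εdia.app (D.dia.obj A) ≫ D.δbd.app (D.dia.obj A) ≫ D.box.map (D.δdd.app A)
        = D.δbd.app A
    rw [D.δN_dia, ← Category.assoc, D.dia_unit_right]
    exact Category.id_comp _
  · show D.dia.map (𝟙 (D.box.obj A)) ≫ D.δdb.app A = D.δdb.app A
    rw [D.dia.map_id, Category.id_comp]
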